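/- Let Δ ⊂ ℝ be compact and suppose α ↦ A(α) = Iₙ - αW with A(α) invertible and ‖A(α)⁻¹‖ (maximum row-sum norm) uniformly bounded on Δ by a constant independent of n, and the row sums of W uniformly bounded. Then for any α₁, α₂ ∈ Δ, |log|det A(α₂)| - log|det A(α₁)|| ≤ C·n·|α₂ - α₁| for a constant C independent of n; i.e., (1/n)(log|det A(α₂)| - log|det A(α₁)|) = O(1) uniformly on Δ. -/

import Mathlib

open Matrix Finset

private lemma hasDerivAt_det_one_add_smul {n : ℕ} (M : Matrix (Fin n) (Fin n) ℝ) :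
    HasDerivAt (fun t : ℝ => Matrix.det (1 + t • M)) M.trace 0 := by
  have heq : (fun t : ℝ => Matrix.det (1 + t • M)) =
      fun t : ℝ => 1 + M.trace * t +
        ((Matrix.det (1 + (Polynomial.X : Polynomial ℝ) • M.map Polynomial.C)).divX.divX.eval t)
          * t ^ 2 := by
    funext t
    exact Matrix.det_one_add_smul t M
  rw [heq]
  have h1 : HasDerivAt (fun t : ℝ => 1 + M.trace * t) M.trace 0 := by
    simpa using (hasDerivAt_id (0:ℝ)).const_mul M.trace |>.const_add 1
  have h2 : HasDerivAt (fun t : ℝ =>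
      ((Matrix.det (1 + (Polynomial.X : Polynomial ℝ) • M.map Polynomial.C)).divX.divX.eval t)
        * t ^ 2) 0 0 := by
    have := (Polynomial.hasDerivAt
      (Matrix.det (1 + (Polynomial.X : Polynomial ℝ) • M.map Polynomial.C)).divX.divX (0:ℝ)).mul
      (hasDerivAt_pow 2 (0:ℝ))
    simpa [Pi.mul_def] using this
  simpa [Pi.add_def] using h1.add h2

private lemma hasDerivAt_logdet {n : ℕ} (W : Matrix (Fin n) (Fin n) ℝ) {α₀ : ℝ}
    (hA : IsUnit (1 - α₀ • W).det) :
    HasDerivAt (fun α : ℝ => Real.log (Matrix.det (1 - α • W)))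
      (-Matrix.trace ((1 - α₀ • W)⁻¹ * W)) α₀ := by
  set A : Matrix (Fin n) (Fin n) ℝ := 1 - α₀ • W with hAdef
  set M : Matrix (Fin n) (Fin n) ℝ := -(A⁻¹ * W) with hMdef
  have hdet0 : A.det ≠ 0 := hA.ne_zero
  have hfac : ∀ α : ℝ, (1 : Matrix (Fin n) (Fin n) ℝ) - α • W = A * (1 + (α - α₀) • M) := by
    intro α
    have hAW : A * (A⁻¹ * W) = W := by
      rw [← Matrix.mul_assoc, Matrix.mul_nonsing_inv A hA, Matrix.one_mul]
    have hAM : A * M = -W := by rw [hMdef, Matrix.mul_neg, hAW]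
    rw [mul_add, mul_one, Matrix.mul_smul, hAM, hAdef]
    module
  -- derivative of F α = det (1 - α • W)
  have hF : HasDerivAt (fun α : ℝ => Matrix.det (1 - α • W)) (A.det * M.trace) α₀ := by
    have hinner : HasDerivAt (fun α : ℝ => Matrix.det (1 + (α - α₀) • M)) M.trace α₀ := by
      have := HasDerivAt.comp_of_eq (x := α₀) (hasDerivAt_det_one_add_smul M)
        ((hasDerivAt_id α₀).sub_const α₀) (by simp)
      simpa [Function.comp_def] using this
    have := hinner.const_mul A.det
    refine this.congr_of_eventuallyEq ?_
    filter_upwards with α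
    rw [hfac α, Matrix.det_mul]
  have hFα₀ : Matrix.det (1 - α₀ • W) = A.det := rfl
  have hlog := (Real.hasDerivAt_log (by rw [hFα₀]; exact hdet0)).comp α₀ hF
  have : (Matrix.det (1 - α₀ • W))⁻¹ * (A.det * M.trace) = -Matrix.trace (A⁻¹ * W) := by
    rw [hFα₀, inv_mul_cancel_left₀ hdet0, hMdef, Matrix.trace_neg]
  simpa [Function.comp_def, this] using hlog

/-- If `Δ ⊂ ℝ` is compact (and convex), the row sums of `W` are bounded by `C_W`, and
for each `α ∈ Δ` the matrix `A(α) = Iₙ - αW` is invertible with the row sums of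
`A(α)⁻¹` bounded by `C_A`, then
`|log|det A(α₂)| - log|det A(α₁)|| ≤ C_W C_A · n · |α₂ - α₁|` for all `α₁, α₂ ∈ Δ`;
in particular `(1/n)(log|det A(α₂)| - log|det A(α₁)|) = O(1)` uniformly on `Δ`. -/
theorem logdet_lipschitz_on_compact {n : ℕ} (W : Matrix (Fin n) (Fin n) ℝ)
    (Δ : Set ℝ) (hΔc : IsCompact Δ) (hΔconv : Convex ℝ Δ)
    (CW CA : ℝ)
    (hWrow : ∀ i, ∑ j : Fin n, |W i j| ≤ CW)
    (hinv : ∀ α ∈ Δ, IsUnit (1 - α • W).det)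
    (hArow : ∀ α ∈ Δ, ∀ i, ∑ j : Fin n, |(1 - α • W)⁻¹ i j| ≤ CA) :
    ∀ α₁ ∈ Δ, ∀ α₂ ∈ Δ,
      |Real.log (abs (1 - α₂ • W).det) - Real.log (abs (1 - α₁ • W).det)|
        ≤ CW * CA * n * |α₂ - α₁| := by
  rcases Nat.eq_zero_or_pos n with hn0 | hn
  · subst hn0
    intro α₁ hα₁ α₂ hα₂
    simp [Matrix.det_fin_zero]
  intro α₁ hα₁ α₂ hα₂
  have hne : Nonempty (Fin n) := Fin.pos_iff_nonempty.mp hn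
  have hCW : 0 ≤ CW :=
    le_trans (Finset.sum_nonneg fun j _ => abs_nonneg _) (hWrow (Classical.arbitrary _))
  -- bound on the derivative
  have hbound : ∀ α ∈ Δ, |(-Matrix.trace ((1 - α • W)⁻¹ * W))| ≤ CW * CA * n := by
    intro α hα
    rw [abs_neg]
    have htr : Matrix.trace ((1 - α • W)⁻¹ * W)
        = ∑ i : Fin n, ∑ j : Fin n, (1 - α • W)⁻¹ i j * W j i := by
      simp [Matrix.trace, Matrix.mul_apply, Matrix.diag]
    rw [htr]
    calc |∑ i : Fin n, ∑ j : Fin n, (1 - α • W)⁻¹ i j * W j i|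
        ≤ ∑ i : Fin n, ∑ j : Fin n, |(1 - α • W)⁻¹ i j * W j i| := by
          refine (Finset.abs_sum_le_sum_abs _ _).trans ?_
          exact Finset.sum_le_sum fun i _ => Finset.abs_sum_le_sum_abs _ _
      _ ≤ ∑ i : Fin n, ∑ j : Fin n, |(1 - α • W)⁻¹ i j| * CW := by
          refine Finset.sum_le_sum fun i _ => Finset.sum_le_sum fun j _ => ?_
          rw [abs_mul]
          refine mul_le_mul_of_nonneg_left ?_ (abs_nonneg _)
          exact le_trans (Finset.single_le_sum (fun k _ => abs_nonneg (W j k))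
            (Finset.mem_univ i)) (hWrow j)
      _ ≤ ∑ i : Fin n, CA * CW := by
          refine Finset.sum_le_sum fun i _ => ?_
          rw [← Finset.sum_mul]
          exact mul_le_mul_of_nonneg_right (hArow α hα i) hCW
      _ = CW * CA * n := by
          simp [Finset.sum_const]
          ring
  have hderiv : ∀ α ∈ Δ, HasDerivWithinAt (fun α : ℝ => Real.log (Matrix.det (1 - α • W)))
      (-Matrix.trace ((1 - α • W)⁻¹ * W)) Δ α :=
    fun α hα => (hasDerivAt_logdet W (hinv α hα)).hasDerivWithinAt
  have := hΔconv.norm_image_sub_le_of_norm_hasDerivWithin_le hderiv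
    (fun α hα => by simpa [Real.norm_eq_abs] using hbound α hα) hα₁ hα₂
  simpa [Real.norm_eq_abs, Real.log_abs] using this
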